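/- Suppose G is connected and p ≥ r + 2, and the measurements are noiseless (Δ = 0, so L̂ = L_Z). Then every second-order critical point Y of the rank-p problem min{⟨L̂, Y Yᵀ⟩ : Y feasible} satisfies Y Yᵀ = Z Zᵀ. -/
import Mathlib


open Matrix MeasureTheory ProbabilityTheory
open scoped Kronecker BigOperators

namespace SyncPaper

variable {α : Type*}

/-- The `i`-th `r × p` row-block of a block matrix `Y ∈ α^{rn × p}`. -/
def blk {n r p : ℕ} (Y : Matrix (Fin n × Fin r) (Fin p) α) (i : Fin n) :
    Matrix (Fin r) (Fin p) α :=
  Matrix.of fun a b => Y (i, a) b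

/-- `Y` is feasible: every `r × p` row-block has orthonormal rows. -/
def Feasible {n r p : ℕ} (Y : Matrix (Fin n × Fin r) (Fin p) ℝ) : Prop :=
  ∀ i, blk Y i * (blk Y i)ᵀ = 1

/-- Symmetric block-diagonal projection: keeps the symmetric part of each `r × r`
diagonal block and zeroes out all off-diagonal blocks. -/
noncomputable def SBD {n r : ℕ} (M : Matrix (Fin n × Fin r) (Fin n × Fin r) ℝ) :
    Matrix (Fin n × Fin r) (Fin n × Fin r) ℝ :=
  Matrix.of fun q q' => if q.1 = q'.1 then (M q q' + M q' q) / 2 else 0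

/-- The matrix `S(Y) = L̂ − SBD(L̂ Y Yᵀ)`. -/
noncomputable def Smat {n r p : ℕ} (Lhat : Matrix (Fin n × Fin r) (Fin n × Fin r) ℝ)
    (Y : Matrix (Fin n × Fin r) (Fin p) ℝ) :
    Matrix (Fin n × Fin r) (Fin n × Fin r) ℝ :=
  Lhat - SBD (Lhat * Y * Yᵀ)

/-- Second-order critical point of the rank-`p` problem `min ⟨L̂, Y Yᵀ⟩` over feasible `Y`. -/
def IsSecondOrderCritical {n r p : ℕ} (Lhat : Matrix (Fin n × Fin r) (Fin n × Fin r) ℝ)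
    (Y : Matrix (Fin n × Fin r) (Fin p) ℝ) : Prop :=
  Feasible Y ∧ Smat Lhat Y * Y = 0 ∧
    ∀ Ydot : Matrix (Fin n × Fin r) (Fin p) ℝ,
      (∀ i, blk Ydot i * (blk Y i)ᵀ + blk Y i * (blk Ydot i)ᵀ = 0) →
      0 ≤ (Smat Lhat Y * Ydot * Ydotᵀ).trace

/-- The stacked ground truth `Z ∈ ℝ^{rn × r}`. -/
def Zstack {n r : ℕ} (Zb : Fin n → Matrix (Fin r) (Fin r) ℝ) :
    Matrix (Fin n × Fin r) (Fin r) ℝ :=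
  Matrix.of fun q b => Zb q.1 q.2 b

/-- The block-diagonal matrix `D` with diagonal blocks `Z_1, …, Z_n`. -/
def Dmat {n r : ℕ} (Zb : Fin n → Matrix (Fin r) (Fin r) ℝ) :
    Matrix (Fin n × Fin r) (Fin n × Fin r) ℝ :=
  Matrix.of fun q q' => if q.1 = q'.1 then Zb q.1 q.2 q'.2 else 0

/-- `L_Z = D (L ⊗ I_r) Dᵀ`. -/
def LZmat {n r : ℕ} (L : Matrix (Fin n) (Fin n) ℝ) (Zb : Fin n → Matrix (Fin r) (Fin r) ℝ) :
    Matrix (Fin n × Fin r) (Fin n × Fin r) ℝ :=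
  Dmat Zb * (L ⊗ₖ (1 : Matrix (Fin r) (Fin r) ℝ)) * (Dmat Zb)ᵀ

/-- The ℓ₂→ℓ₂ operator norm of a matrix. -/
noncomputable def opNorm {m m' : Type*} [Fintype m] [Fintype m'] [DecidableEq m']
    (M : Matrix m m' ℝ) : ℝ :=
  ‖(Matrix.toEuclideanLin (𝕜 := ℝ) (m := m) (n := m')).trans
      LinearMap.toContinuousLinearMap M‖

/-- The second-smallest eigenvalue of a connected graph Laplacian, via the variational
(Courant–Fischer) characterization: the minimum of the quadratic form over unit vectors
orthogonal to the all-ones vector. -/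
noncomputable def lam2 {n : ℕ} (L : Matrix (Fin n) (Fin n) ℝ) : ℝ :=
  sInf {t : ℝ | ∃ x : Fin n → ℝ, (∑ i, x i = 0) ∧ (∑ i, (x i) ^ 2 = 1) ∧ t = x ⬝ᵥ (L *ᵥ x)}

/-- Squared Frobenius norm of a real matrix. -/
def frobSq {m m' : Type*} [Fintype m] [Fintype m'] (M : Matrix m m' ℝ) : ℝ :=
  ∑ i, ∑ j, (M i j) ^ 2

/-- The inner product `⟨A, B⟩ = tr(A Bᵀ)`. -/
def ip {m : Type*} [Fintype m] (A B : Matrix m m ℝ) : ℝ := (A * Bᵀ).trace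

/-- Feasibility for the SDP relaxation. -/
def SDPFeasible {n r : ℕ} (X : Matrix (Fin n × Fin r) (Fin n × Fin r) ℝ) : Prop :=
  X.PosSemidef ∧ SBD X = 1

end SyncPaper

namespace SyncPaper

/-! ### Auxiliary lemmas for the proof of the noiseless landscape theorem -/

section AuxBlocks

variable {n r p : ℕ}

/-- The `(i,j)` block of an `rn × rn` matrix. -/
def sb (M : Matrix (Fin n × Fin r) (Fin n × Fin r) ℝ) (i j : Fin n) :
    Matrix (Fin r) (Fin r) ℝ :=
  Matrix.of fun a b => M (i, a) (j, b)

lemma trace_eq_sum_sb (M : Matrix (Fin n × Fin r) (Fin n × Fin r) ℝ) :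
    M.trace = ∑ i, (sb M i i).trace := by
  simp [Matrix.trace, Matrix.diag, sb, Fintype.sum_prod_type]

lemma sb_mul (M N : Matrix (Fin n × Fin r) (Fin n × Fin r) ℝ) (i j : Fin n) :
    sb (M * N) i j = ∑ k, sb M i k * sb N k j := by
  ext a b
  simp [sb, Matrix.mul_apply, Fintype.sum_prod_type, Matrix.sum_apply]

lemma sb_mulT (U V : Matrix (Fin n × Fin r) (Fin p) ℝ) (i j : Fin n) :
    sb (U * Vᵀ) i j = blk U i * (blk V j)ᵀ := by
  ext a b
  simp [sb, blk, Matrix.mul_apply]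

lemma sb_sub (M N : Matrix (Fin n × Fin r) (Fin n × Fin r) ℝ) (i j : Fin n) :
    sb (M - N) i j = sb M i j - sb N i j := by
  ext a b; simp [sb]

lemma trace_mul_mulT (M : Matrix (Fin n × Fin r) (Fin n × Fin r) ℝ)
    (U : Matrix (Fin n × Fin r) (Fin p) ℝ) :
    (M * U * Uᵀ).trace = ∑ i, ∑ j, ((sb M i j) * (blk U j * (blk U i)ᵀ)).trace := by
  rw [Matrix.mul_assoc, trace_eq_sum_sb]
  refine Finset.sum_congr rfl fun i _ => ?_
  rw [sb_mul, Matrix.trace_sum]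
  refine Finset.sum_congr rfl fun j _ => ?_
  rw [sb_mulT]

lemma sb_LZmat (L : Matrix (Fin n) (Fin n) ℝ) (Zb : Fin n → Matrix (Fin r) (Fin r) ℝ)
    (i j : Fin n) :
    sb (LZmat L Zb) i j = L i j • (Zb i * (Zb j)ᵀ) := by
  ext a b
  simp only [sb, LZmat, Matrix.of_apply, Matrix.mul_apply, Matrix.transpose_apply,
    Fintype.sum_prod_type, Dmat, Matrix.kroneckerMap_apply, Matrix.smul_apply, smul_eq_mul,
    Matrix.one_apply, mul_ite, ite_mul, mul_zero, zero_mul, mul_one, one_mul,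
    Finset.sum_ite_eq, Finset.sum_ite_eq', Finset.mem_univ, if_true]
  calc (∑ x : Fin n, ∑ x1 : Fin r, if j = x then Zb i a x1 * L i x * Zb j b x1 else 0)
      = ∑ x : Fin n, (if j = x then ∑ x1 : Fin r, Zb i a x1 * L i x * Zb j b x1 else 0) := by
        refine Finset.sum_congr rfl fun x _ => ?_
        split <;> simp
    _ = ∑ x1 : Fin r, Zb i a x1 * L i j * Zb j b x1 := by
        rw [Finset.sum_ite_eq]; simp
    _ = L i j * ∑ x : Fin r, Zb i a x * Zb j b x := by
        rw [Finset.mul_sum]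
        exact Finset.sum_congr rfl fun x _ => by ring

lemma sb_SBD (M : Matrix (Fin n × Fin r) (Fin n × Fin r) ℝ) (i j : Fin n) :
    sb (SBD M) i j
      = if i = j then (2⁻¹ : ℝ) • (sb M i i + (sb M i i)ᵀ) else 0 := by
  ext a b
  by_cases h : i = j
  · subst h
    simp [sb, SBD, Matrix.transpose_apply, div_eq_inv_mul, mul_add]
  · simp [sb, SBD, h]

lemma conj_trace {r p : ℕ} (Zi Zj : Matrix (Fin r) (Fin r) ℝ) (hZi : Ziᵀ * Zi = 1)
    (hZj : Zjᵀ * Zj = 1) (Wi Wj : Matrix (Fin r) (Fin p) ℝ) :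
    ((Zi * Zjᵀ) * ((Zj * Wj) * (Zi * Wi)ᵀ)).trace = (Wj * Wiᵀ).trace := by
  have h1 : (Zi * Zjᵀ) * ((Zj * Wj) * (Zi * Wi)ᵀ)
      = Zi * ((Zjᵀ * Zj) * (Wj * (Wiᵀ * Ziᵀ))) := by
    rw [Matrix.transpose_mul]
    simp only [Matrix.mul_assoc]
  rw [h1, hZj, Matrix.one_mul, Matrix.trace_mul_comm]
  have h2 : (Wj * (Wiᵀ * Ziᵀ)) * Zi = Wj * (Wiᵀ * (Ziᵀ * Zi)) := by
    simp only [Matrix.mul_assoc]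
  rw [h2, hZi, Matrix.mul_one]

lemma trace_mulT_self (M : Matrix (Fin r) (Fin p) ℝ) :
    (M * Mᵀ).trace = ∑ c, ∑ d, (M c d)^2 := by
  simp [Matrix.trace, Matrix.diag, Matrix.mul_apply, sq]

lemma trace_mulT_self_nonneg (M : Matrix (Fin r) (Fin p) ℝ) :
    0 ≤ (M * Mᵀ).trace := by
  rw [trace_mulT_self]
  exact Finset.sum_nonneg fun c _ => Finset.sum_nonneg fun d _ => sq_nonneg _

lemma eq_zero_of_trace_mulT_self (M : Matrix (Fin r) (Fin p) ℝ)
    (h : (M * Mᵀ).trace = 0) : M = 0 := by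
  rw [trace_mulT_self] at h
  ext c d
  have hc := (Finset.sum_eq_zero_iff_of_nonneg
    (fun c _ => Finset.sum_nonneg fun d _ => sq_nonneg (M c d))).mp h c (Finset.mem_univ c)
  have hd := (Finset.sum_eq_zero_iff_of_nonneg
    (fun d _ => sq_nonneg (M c d))).mp hc d (Finset.mem_univ d)
  simpa using pow_eq_zero_iff (n := 2) (by norm_num) |>.mp hd

end AuxBlocks

section Units

variable {r p : ℕ}

/-- matrix unit `E_{ak}` in `ℝ^{r×p}` -/
def unit (a : Fin r) (k : Fin p) : Matrix (Fin r) (Fin p) ℝ :=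
  Matrix.of fun c d => (if c = a then (1:ℝ) else 0) * (if d = k then 1 else 0)

lemma unit_apply (a : Fin r) (k : Fin p) (c d) :
    unit a k c d = (if c = a then (1:ℝ) else 0) * (if d = k then 1 else 0) := rfl

lemma sum_unit_mulT :
    ∑ a : Fin r, ∑ k : Fin p, unit a k * (unit a k)ᵀ = (p : ℝ) • 1 := by
  ext c d
  simp [Matrix.sum_apply, Matrix.mul_apply, unit_apply, ite_mul, mul_ite,
    Finset.sum_ite_eq, Finset.sum_ite_eq', Matrix.one_apply, eq_comm]

lemma sum_unit_mul_unit (B : Matrix (Fin p) (Fin r) ℝ) :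
    ∑ a : Fin r, ∑ k : Fin p, unit a k * B * unit a k = Bᵀ := by
  ext c d
  simp [Matrix.sum_apply, Matrix.mul_apply, unit_apply, ite_mul, mul_ite,
    Finset.sum_ite_eq, Finset.sum_ite_eq', Finset.mul_sum, Finset.sum_mul]

lemma sum_unitT_mul_unit (C : Matrix (Fin r) (Fin r) ℝ) :
    ∑ a : Fin r, ∑ k : Fin p, (unit a k)ᵀ * C * unit a k
      = C.trace • (1 : Matrix (Fin p) (Fin p) ℝ) := by
  ext u v
  simp [Matrix.sum_apply, Matrix.mul_apply, unit_apply, Matrix.transpose_apply, ite_mul, mul_ite,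
    Finset.sum_ite_eq, Finset.sum_ite_eq', Matrix.one_apply, Matrix.trace, Matrix.diag,
    Finset.sum_comm (γ := Fin p)]

lemma sum_unitT_unit :
    ∑ a : Fin r, ∑ k : Fin p, (unit a k)ᵀ * unit a k = (r : ℝ) • 1 := by
  ext u v
  simp [Matrix.sum_apply, Matrix.mul_apply, unit_apply, Matrix.transpose_apply, ite_mul, mul_ite,
    Finset.sum_ite_eq, Finset.sum_ite_eq', Matrix.one_apply, eq_comm]

lemma sum_unitT_mul_unitT (D : Matrix (Fin r) (Fin p) ℝ) :
    ∑ a : Fin r, ∑ k : Fin p, (unit a k)ᵀ * D * (unit a k)ᵀ = Dᵀ := by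
  ext u e
  simp [Matrix.sum_apply, Matrix.mul_apply, unit_apply, Matrix.transpose_apply, ite_mul, mul_ite,
    Finset.sum_ite_eq, Finset.sum_ite_eq', Finset.mul_sum, Finset.sum_mul]

/-- the test block `W(a,k) = E_{ak} - X E_{ak}ᵀ X`. -/
noncomputable def tb (X : Matrix (Fin r) (Fin p) ℝ) (a : Fin r) (k : Fin p) :
    Matrix (Fin r) (Fin p) ℝ :=
  unit a k - X * (unit a k)ᵀ * X

lemma tb_tangent (X : Matrix (Fin r) (Fin p) ℝ) (hX : X * Xᵀ = 1) (a : Fin r) (k : Fin p) :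
    tb X a k * Xᵀ + X * (tb X a k)ᵀ = 0 := by
  have h1 : tb X a k * Xᵀ = unit a k * Xᵀ - X * (unit a k)ᵀ := by
    rw [tb, Matrix.sub_mul, Matrix.mul_assoc (X * (unit a k)ᵀ) X Xᵀ, hX, Matrix.mul_one]
  have h2 : X * (tb X a k)ᵀ = X * (unit a k)ᵀ - unit a k * Xᵀ := by
    rw [tb, Matrix.transpose_sub, Matrix.mul_sub, Matrix.transpose_mul, Matrix.transpose_mul,
      Matrix.transpose_transpose]
    congr 1
    calc X * (Xᵀ * ((unit a k)ᵀᵀ * Xᵀ)) = (X * Xᵀ) * (unit a k * Xᵀ) := by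
          rw [Matrix.transpose_transpose]
          simp only [Matrix.mul_assoc]
      _ = unit a k * Xᵀ := by rw [hX, Matrix.one_mul]
  rw [h1, h2]
  abel

lemma tb_mulT (X X' : Matrix (Fin r) (Fin p) ℝ) (a k) :
    tb X a k * (tb X' a k)ᵀ
      = unit a k * (unit a k)ᵀ - (unit a k * X'ᵀ * unit a k) * X'ᵀ
        - X * ((unit a k)ᵀ * X * (unit a k)ᵀ)
        + X * ((unit a k)ᵀ * (X * X'ᵀ) * unit a k) * X'ᵀ := by
  simp only [tb, Matrix.sub_mul, Matrix.mul_sub, Matrix.transpose_sub, Matrix.transpose_mul,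
    Matrix.transpose_transpose, Matrix.mul_assoc]
  abel

lemma sum_tb_mulT (Xi Xj : Matrix (Fin r) (Fin p) ℝ) (hXi : Xi * Xiᵀ = 1)
    (hXj : Xj * Xjᵀ = 1) :
    ∑ a : Fin r, ∑ k : Fin p, tb Xj a k * (tb Xi a k)ᵀ
      = ((p : ℝ) • 1 - 1 - 1) + ((Xj * Xiᵀ).trace) • (Xj * Xiᵀ) := by
  have h1 : ∑ a : Fin r, ∑ k : Fin p, (unit a k * Xiᵀ * unit a k) * Xiᵀ
      = (1 : Matrix (Fin r) (Fin r) ℝ) := by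
    calc ∑ a : Fin r, ∑ k : Fin p, (unit a k * Xiᵀ * unit a k) * Xiᵀ
        = (∑ a : Fin r, ∑ k : Fin p, unit a k * Xiᵀ * unit a k) * Xiᵀ := by
          simp only [← Matrix.sum_mul]
      _ = Xiᵀᵀ * Xiᵀ := by rw [sum_unit_mul_unit]
      _ = 1 := by rw [Matrix.transpose_transpose, hXi]
  have h2 : ∑ a : Fin r, ∑ k : Fin p, Xj * ((unit a k)ᵀ * Xj * (unit a k)ᵀ)
      = (1 : Matrix (Fin r) (Fin r) ℝ) := by
    calc ∑ a : Fin r, ∑ k : Fin p, Xj * ((unit a k)ᵀ * Xj * (unit a k)ᵀ)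
        = Xj * (∑ a : Fin r, ∑ k : Fin p, (unit a k)ᵀ * Xj * (unit a k)ᵀ) := by
          simp only [← Matrix.mul_sum]
      _ = Xj * Xjᵀ := by rw [sum_unitT_mul_unitT]
      _ = 1 := hXj
  have h3 : ∑ a : Fin r, ∑ k : Fin p, Xj * ((unit a k)ᵀ * (Xj * Xiᵀ) * unit a k) * Xiᵀ
      = ((Xj * Xiᵀ).trace) • (Xj * Xiᵀ) := by
    calc ∑ a : Fin r, ∑ k : Fin p, Xj * ((unit a k)ᵀ * (Xj * Xiᵀ) * unit a k) * Xiᵀ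
        = Xj * (∑ a : Fin r, ∑ k : Fin p, (unit a k)ᵀ * (Xj * Xiᵀ) * unit a k) * Xiᵀ := by
          simp only [← Matrix.mul_sum, ← Matrix.sum_mul]
      _ = Xj * ((Xj * Xiᵀ).trace • (1 : Matrix (Fin p) (Fin p) ℝ)) * Xiᵀ := by
          rw [sum_unitT_mul_unit]
      _ = ((Xj * Xiᵀ).trace) • (Xj * Xiᵀ) := by
          rw [Matrix.mul_smul, Matrix.smul_mul, Matrix.mul_one]
  calc ∑ a : Fin r, ∑ k : Fin p, tb Xj a k * (tb Xi a k)ᵀ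
      = ∑ a : Fin r, ∑ k : Fin p, (unit a k * (unit a k)ᵀ
          - (unit a k * Xiᵀ * unit a k) * Xiᵀ - Xj * ((unit a k)ᵀ * Xj * (unit a k)ᵀ)
          + Xj * ((unit a k)ᵀ * (Xj * Xiᵀ) * unit a k) * Xiᵀ) := by
        refine Finset.sum_congr rfl fun a _ => Finset.sum_congr rfl fun k _ => ?_
        exact tb_mulT Xj Xi a k
    _ = ((p : ℝ) • 1 - 1 - 1) + ((Xj * Xiᵀ).trace) • (Xj * Xiᵀ) := by
        simp only [Finset.sum_add_distrib, Finset.sum_sub_distrib]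
        rw [sum_unit_mulT, h1, h2, h3]

lemma sum_tb_mulT_self (X : Matrix (Fin r) (Fin p) ℝ) (hX : X * Xᵀ = 1) :
    ∑ a : Fin r, ∑ k : Fin p, tb X a k * (tb X a k)ᵀ = ((p : ℝ) + r - 2) • 1 := by
  rw [sum_tb_mulT X X hX hX, hX, Matrix.trace_one, Fintype.card_fin]
  module

lemma sum_trace_tb_cross (Xi Xj : Matrix (Fin r) (Fin p) ℝ) (hXi : Xi * Xiᵀ = 1)
    (hXj : Xj * Xjᵀ = 1) :
    ∑ a : Fin r, ∑ k : Fin p, (tb Xj a k * (tb Xi a k)ᵀ).trace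
      = (r : ℝ) * p - 2 * r + ((Xj * Xiᵀ).trace)^2 := by
  have h : ∑ a : Fin r, ∑ k : Fin p, (tb Xj a k * (tb Xi a k)ᵀ).trace
      = (∑ a : Fin r, ∑ k : Fin p, tb Xj a k * (tb Xi a k)ᵀ).trace := by
    simp only [Matrix.trace_sum]
  rw [h, sum_tb_mulT Xi Xj hXi hXj]
  simp only [Matrix.trace_add, Matrix.trace_sub, Matrix.trace_smul, Matrix.trace_one,
    Fintype.card_fin, smul_eq_mul]
  ring

end Units

section Swap
variable {n r p : ℕ}

lemma sum_swap4 (f : Fin r → Fin p → Fin n → Fin n → ℝ) :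
    ∑ a, ∑ k, ∑ i, ∑ j, f a k i j = ∑ i, ∑ j, ∑ a, ∑ k, f a k i j := by
  calc ∑ a, ∑ k, ∑ i, ∑ j, f a k i j
      = ∑ a, ∑ i, ∑ k, ∑ j, f a k i j := by
        refine Finset.sum_congr rfl fun a _ => ?_
        exact Finset.sum_comm
    _ = ∑ i, ∑ a, ∑ k, ∑ j, f a k i j := Finset.sum_comm
    _ = ∑ i, ∑ j, ∑ a, ∑ k, f a k i j := by
        refine Finset.sum_congr rfl fun i _ => ?_
        calc ∑ a, ∑ k, ∑ j, f a k i j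
            = ∑ a, ∑ j, ∑ k, f a k i j := by
              refine Finset.sum_congr rfl fun a _ => ?_
              exact Finset.sum_comm
          _ = ∑ j, ∑ a, ∑ k, f a k i j := Finset.sum_comm

lemma sum_swap3 (f : Fin r → Fin p → Fin n → ℝ) :
    ∑ a, ∑ k, ∑ i, f a k i = ∑ i, ∑ a, ∑ k, f a k i := by
  calc ∑ a, ∑ k, ∑ i, f a k i
      = ∑ a, ∑ i, ∑ k, f a k i := by
        refine Finset.sum_congr rfl fun a _ => ?_
        exact Finset.sum_comm
    _ = ∑ i, ∑ a, ∑ k, f a k i := Finset.sum_comm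

end Swap

/-- **Theorem 1.1 (noiseless landscape).**  If `G` is connected, the measurements are exact
(`Δ = 0`, so `L̂ = L_Z`), and `p ≥ r + 2`, then every second-order critical point `Y` of the
rank-`p` problem satisfies `Y Yᵀ = Z Zᵀ`. -/
theorem noiseless_landscape
    (n r p : ℕ) (hn : 1 ≤ n) (hr : 1 ≤ r) (hrp : r ≤ p) (hp : r + 2 ≤ p)
    (G : SimpleGraph (Fin n)) [DecidableRel G.Adj] (hG : G.Connected)
    (Zb : Fin n → Matrix (Fin r) (Fin r) ℝ) (hZb : ∀ i, Zb i * (Zb i)ᵀ = 1)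
    (Lhat : Matrix (Fin n × Fin r) (Fin n × Fin r) ℝ)
    (hLhat : Lhat = LZmat (G.lapMatrix ℝ) Zb)
    (Y : Matrix (Fin n × Fin r) (Fin p) ℝ)
    (hY : IsSecondOrderCritical Lhat Y) :
    Y * Yᵀ = Zstack Zb * (Zstack Zb)ᵀ := by
  classical
  obtain ⟨hfeas, _hfo, hsoc⟩ := hY
  subst hLhat
  set L : Matrix (Fin n) (Fin n) ℝ := G.lapMatrix ℝ with hLdef
  set X : Fin n → Matrix (Fin r) (Fin p) ℝ := fun i => (Zb i)ᵀ * blk Y i with hXdef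
  have hZtZ : ∀ i, (Zb i)ᵀ * Zb i = 1 := fun i => mul_eq_one_comm.mp (hZb i)
  have hYZ : ∀ i, blk Y i = Zb i * X i := by
    intro i
    simp only [hXdef]
    rw [← Matrix.mul_assoc, hZb i, Matrix.one_mul]
  have hXX : ∀ i, X i * (X i)ᵀ = 1 := by
    intro i
    have h : X i * (X i)ᵀ = (Zb i)ᵀ * ((blk Y i * (blk Y i)ᵀ) * Zb i) := by
      simp only [hXdef, Matrix.transpose_mul, Matrix.transpose_transpose, Matrix.mul_assoc]
    rw [h, hfeas i, Matrix.one_mul, hZtZ i]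
  set t : Fin n → Fin n → ℝ := fun i j => (X j * (X i)ᵀ).trace with htdef
  have htsymm : ∀ i j, (X i * (X j)ᵀ).trace = t i j := by
    intro i j
    calc (X i * (X j)ᵀ).trace = ((X i * (X j)ᵀ)ᵀ).trace := (Matrix.trace_transpose _).symm
      _ = (X j * (X i)ᵀ).trace := by
          rw [Matrix.transpose_mul (X i) ((X j)ᵀ), Matrix.transpose_transpose (X j)]
      _ = t i j := rfl
  have htii : ∀ i, t i i = (r : ℝ) := by
    intro i
    simp only [htdef, hXX i, Matrix.trace_one, Fintype.card_fin]
  have hexp : ∀ i j, ((X i - X j) * (X i - X j)ᵀ).trace = 2 * (r : ℝ) - 2 * t i j := by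
    intro i j
    rw [Matrix.transpose_sub, Matrix.sub_mul, Matrix.mul_sub, Matrix.mul_sub,
      Matrix.trace_sub, Matrix.trace_sub, Matrix.trace_sub, hXX i, hXX j,
      Matrix.trace_one, Fintype.card_fin, htsymm i j]
    have h2 : (X j * (X i)ᵀ).trace = t i j := rfl
    rw [h2]; ring
  have htler : ∀ i j, t i j ≤ (r : ℝ) := by
    intro i j
    have h0 := trace_mulT_self_nonneg (X i - X j)
    rw [hexp i j] at h0
    linarith
  have hXeq_of_t : ∀ i j, t i j = (r : ℝ) → X i = X j := by
    intro i j ht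
    have h0 : ((X i - X j) * (X i - X j)ᵀ).trace = 0 := by rw [hexp i j, ht]; ring
    exact sub_eq_zero.mp (eq_zero_of_trace_mulT_self _ h0)
  set Ydot : Fin r → Fin p → Matrix (Fin n × Fin r) (Fin p) ℝ :=
    fun a k => Matrix.of fun q b => (Zb q.1 * tb (X q.1) a k) q.2 b with hYdotdef
  have hblkYdot : ∀ a k i, blk (Ydot a k) i = Zb i * tb (X i) a k := by
    intro a k i
    ext c b
    simp [hYdotdef, blk]
  have htan : ∀ a k i,
      blk (Ydot a k) i * (blk Y i)ᵀ + blk Y i * (blk (Ydot a k) i)ᵀ = 0 := by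
    intro a k i
    rw [hblkYdot, hYZ i]
    have hexp2 : (Zb i * tb (X i) a k) * (Zb i * X i)ᵀ + (Zb i * X i) * (Zb i * tb (X i) a k)ᵀ
        = Zb i * ((tb (X i) a k * (X i)ᵀ + X i * (tb (X i) a k)ᵀ) * (Zb i)ᵀ) := by
      simp only [Matrix.transpose_mul, Matrix.mul_add, Matrix.add_mul, Matrix.mul_assoc]
    rw [hexp2, tb_tangent (X i) (hXX i), Matrix.zero_mul, Matrix.mul_zero]
  have hQ : ∀ a k, 0 ≤ (Smat (LZmat L Zb) Y * Ydot a k * (Ydot a k)ᵀ).trace :=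
    fun a k => hsoc (Ydot a k) (htan a k)
  set Λ : Fin n → Matrix (Fin r) (Fin r) ℝ := fun i => sb (LZmat L Zb * Y * Yᵀ) i i with hΛdef
  have hQeq : ∀ a k, (Smat (LZmat L Zb) Y * Ydot a k * (Ydot a k)ᵀ).trace
      = (∑ i, ∑ j, L i j * (tb (X j) a k * (tb (X i) a k)ᵀ).trace)
        - ∑ i, ((2⁻¹ : ℝ) • (Λ i + (Λ i)ᵀ)
            * ((Zb i * tb (X i) a k) * (Zb i * tb (X i) a k)ᵀ)).trace := by
    intro a k
    rw [Smat, Matrix.sub_mul, Matrix.sub_mul, Matrix.trace_sub, trace_mul_mulT, trace_mul_mulT]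
    congr 1
    · refine Finset.sum_congr rfl fun i _ => Finset.sum_congr rfl fun j _ => ?_
      rw [sb_LZmat, hblkYdot, hblkYdot, Matrix.smul_mul, Matrix.trace_smul, smul_eq_mul,
        conj_trace _ _ (hZtZ i) (hZtZ j)]
    · refine Finset.sum_congr rfl fun i _ => ?_
      have hzero : ∀ j ∈ (Finset.univ : Finset (Fin n)), j ≠ i →
          ((sb (SBD (LZmat L Zb * Y * Yᵀ)) i j)
            * (blk (Ydot a k) j * (blk (Ydot a k) i)ᵀ)).trace = 0 := by
        intro j _ hji
        rw [sb_SBD, if_neg (fun h => hji h.symm), Matrix.zero_mul, Matrix.trace_zero]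
      rw [Finset.sum_eq_single_of_mem i (Finset.mem_univ i) hzero, sb_SBD, if_pos rfl, hblkYdot]
  have hTotnn : (0:ℝ) ≤ ∑ a : Fin r, ∑ k : Fin p,
      (Smat (LZmat L Zb) Y * Ydot a k * (Ydot a k)ᵀ).trace :=
    Finset.sum_nonneg fun a _ => Finset.sum_nonneg fun k _ => hQ a k
  have hcross : ∑ a : Fin r, ∑ k : Fin p,
      ∑ i, ∑ j, L i j * (tb (X j) a k * (tb (X i) a k)ᵀ).trace
      = ∑ i, ∑ j, L i j * ((r : ℝ) * p - 2 * r + (t i j)^2) := by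
    rw [sum_swap4]
    refine Finset.sum_congr rfl fun i _ => Finset.sum_congr rfl fun j _ => ?_
    simp only [← Finset.mul_sum]
    rw [sum_trace_tb_cross (X i) (X j) (hXX i) (hXX j)]
  have hdiagsum : ∀ i, ∑ a : Fin r, ∑ k : Fin p,
      (Zb i * tb (X i) a k) * (Zb i * tb (X i) a k)ᵀ = ((p : ℝ) + r - 2) • 1 := by
    intro i
    have h1 : ∀ a k, (Zb i * tb (X i) a k) * (Zb i * tb (X i) a k)ᵀ
        = Zb i * (tb (X i) a k * (tb (X i) a k)ᵀ) * (Zb i)ᵀ := by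
      intro a k
      rw [Matrix.transpose_mul]
      simp only [Matrix.mul_assoc]
    calc ∑ a : Fin r, ∑ k : Fin p, (Zb i * tb (X i) a k) * (Zb i * tb (X i) a k)ᵀ
        = ∑ a : Fin r, ∑ k : Fin p, Zb i * (tb (X i) a k * (tb (X i) a k)ᵀ) * (Zb i)ᵀ := by
          exact Finset.sum_congr rfl fun a _ => Finset.sum_congr rfl fun k _ => h1 a k
      _ = Zb i * (∑ a : Fin r, ∑ k : Fin p, tb (X i) a k * (tb (X i) a k)ᵀ) * (Zb i)ᵀ := by
          simp only [← Matrix.sum_mul, ← Matrix.mul_sum]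
      _ = ((p : ℝ) + r - 2) • 1 := by
          rw [sum_tb_mulT_self (X i) (hXX i), Matrix.mul_smul, Matrix.mul_one,
            Matrix.smul_mul, hZb i]
  have hΛtr : ∀ i, (Λ i).trace = ∑ j, L i j * t i j := by
    intro i
    have hassoc : LZmat L Zb * Y * Yᵀ = LZmat L Zb * (Y * Yᵀ) := Matrix.mul_assoc _ _ _
    simp only [hΛdef, hassoc, sb_mul, Matrix.trace_sum]
    refine Finset.sum_congr rfl fun j _ => ?_
    rw [sb_LZmat, sb_mulT, hYZ i, hYZ j, Matrix.smul_mul, Matrix.trace_smul, smul_eq_mul,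
      conj_trace _ _ (hZtZ i) (hZtZ j)]
  have hdiag : ∑ a : Fin r, ∑ k : Fin p, ∑ i, ((2⁻¹ : ℝ) • (Λ i + (Λ i)ᵀ)
      * ((Zb i * tb (X i) a k) * (Zb i * tb (X i) a k)ᵀ)).trace
      = ((p : ℝ) + r - 2) * ∑ i, ∑ j, L i j * t i j := by
    rw [sum_swap3]
    have hstep : ∀ i, ∑ a : Fin r, ∑ k : Fin p, ((2⁻¹ : ℝ) • (Λ i + (Λ i)ᵀ)
        * ((Zb i * tb (X i) a k) * (Zb i * tb (X i) a k)ᵀ)).trace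
        = ((p : ℝ) + r - 2) * ∑ j, L i j * t i j := by
      intro i
      calc ∑ a : Fin r, ∑ k : Fin p, ((2⁻¹ : ℝ) • (Λ i + (Λ i)ᵀ)
          * ((Zb i * tb (X i) a k) * (Zb i * tb (X i) a k)ᵀ)).trace
          = ((2⁻¹ : ℝ) • (Λ i + (Λ i)ᵀ) * (∑ a : Fin r, ∑ k : Fin p,
              (Zb i * tb (X i) a k) * (Zb i * tb (X i) a k)ᵀ)).trace := by
            refine Eq.symm ?_
            rw [Matrix.mul_sum, Matrix.trace_sum]
            refine Finset.sum_congr rfl fun a _ => ?_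
            rw [Matrix.mul_sum, Matrix.trace_sum]
        _ = ((2⁻¹ : ℝ) • (Λ i + (Λ i)ᵀ) * (((p : ℝ) + r - 2) • 1)).trace := by
            rw [hdiagsum i]
        _ = ((p : ℝ) + r - 2) * ∑ j, L i j * t i j := by
            rw [Matrix.mul_smul, Matrix.mul_one, Matrix.trace_smul, Matrix.trace_smul,
              Matrix.trace_add, Matrix.trace_transpose, smul_eq_mul, smul_eq_mul, hΛtr i]
            ring
    rw [Finset.sum_congr rfl fun i _ => hstep i, ← Finset.mul_sum]
  have hrow : ∀ i, ∑ j, L i j = 0 := by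
    intro i
    have h := congrFun (G.lapMatrix_mulVec_const_eq_zero (R := ℝ)) i
    simpa [Matrix.mulVec, dotProduct] using h
  -- the master inequality
  have hmaster : (0:ℝ) ≤ ∑ i, ∑ j, L i j *
      ((t i j)^2 - ((p : ℝ) + r - 2) * t i j) := by
    have h1 : ∑ a : Fin r, ∑ k : Fin p,
        (Smat (LZmat L Zb) Y * Ydot a k * (Ydot a k)ᵀ).trace
        = (∑ i, ∑ j, L i j * ((r : ℝ) * p - 2 * r + (t i j)^2))
          - ((p : ℝ) + r - 2) * ∑ i, ∑ j, L i j * t i j := by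
      rw [← hcross, ← hdiag, ← Finset.sum_sub_distrib]
      refine Finset.sum_congr rfl fun a _ => ?_
      rw [← Finset.sum_sub_distrib]
      exact Finset.sum_congr rfl fun k _ => hQeq a k
    have h2 : ∑ i, ∑ j, L i j * ((r : ℝ) * p - 2 * r + (t i j)^2)
        = ∑ i, ∑ j, L i j * (t i j)^2 := by
      refine Finset.sum_congr rfl fun i _ => ?_
      have : ∑ j, L i j * ((r : ℝ) * p - 2 * r + (t i j)^2)
          = ((r : ℝ) * p - 2 * r) * ∑ j, L i j + ∑ j, L i j * (t i j)^2 := by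
        rw [Finset.mul_sum, ← Finset.sum_add_distrib]
        exact Finset.sum_congr rfl fun j _ => by ring
      rw [this, hrow i]; ring
    have h3 : ((p : ℝ) + r - 2) * ∑ i, ∑ j, L i j * t i j
        = ∑ i, ∑ j, L i j * (((p : ℝ) + r - 2) * t i j) := by
      rw [Finset.mul_sum]
      refine Finset.sum_congr rfl fun i _ => ?_
      rw [Finset.mul_sum]
      exact Finset.sum_congr rfl fun j _ => by ring
    have h4 := hTotnn
    rw [h1, h2, h3] at h4
    calc (0:ℝ) ≤ ∑ i, ∑ j, L i j * (t i j)^2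
        - ∑ i, ∑ j, L i j * (((p : ℝ) + r - 2) * t i j) := h4
      _ = ∑ i, ∑ j, L i j * ((t i j)^2 - ((p : ℝ) + r - 2) * t i j) := by
        rw [← Finset.sum_sub_distrib]
        refine Finset.sum_congr rfl fun i _ => ?_
        rw [← Finset.sum_sub_distrib]
        exact Finset.sum_congr rfl fun j _ => by ring
  -- rewrite via the adjacency matrix
  have hadjform : ∑ i, ∑ j, L i j * ((t i j)^2 - ((p : ℝ) + r - 2) * t i j)
      = ∑ i, ∑ j, (if G.Adj i j then (1:ℝ) else 0)
          * (((r : ℝ) - t i j) * (t i j - (p : ℝ) + 2)) := by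
    refine Finset.sum_congr rfl fun i _ => ?_
    have hconst : ∑ j, L i j * ((t i j)^2 - ((p : ℝ) + r - 2) * t i j)
        = ∑ j, L i j * (((t i j)^2 - ((p : ℝ) + r - 2) * t i j)
            - ((r : ℝ)^2 - ((p : ℝ) + r - 2) * r)) := by
      have : ∑ j, L i j * (((t i j)^2 - ((p : ℝ) + r - 2) * t i j)
          - ((r : ℝ)^2 - ((p : ℝ) + r - 2) * r))
          = ∑ j, L i j * ((t i j)^2 - ((p : ℝ) + r - 2) * t i j)
            - ((r : ℝ)^2 - ((p : ℝ) + r - 2) * r) * ∑ j, L i j := by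
        rw [Finset.mul_sum, ← Finset.sum_sub_distrib]
        exact Finset.sum_congr rfl fun j _ => by ring
      rw [this, hrow i]; ring
    rw [hconst]
    refine Finset.sum_congr rfl fun j _ => ?_
    by_cases hij : i = j
    · subst hij
      rw [htii i]
      have hAii : ¬ G.Adj i i := G.irrefl
      rw [if_neg hAii]
      ring
    · have hLij : L i j = - (if G.Adj i j then (1:ℝ) else 0) := by
        simp only [hLdef, SimpleGraph.lapMatrix, Matrix.sub_apply, SimpleGraph.degMatrix,
          Matrix.diagonal_apply_ne _ hij, SimpleGraph.adjMatrix_apply]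
        ring
      rw [hLij]
      ring
  -- each adjacency term is nonpositive
  have hrp2 : (r : ℝ) ≤ (p : ℝ) - 2 := by
    have : ((r + 2 : ℕ) : ℝ) ≤ (p : ℕ) := Nat.cast_le.mpr hp
    push_cast at this
    linarith
  have hterm_le : ∀ i j, (if G.Adj i j then (1:ℝ) else 0)
      * (((r : ℝ) - t i j) * (t i j - (p : ℝ) + 2)) ≤ 0 := by
    intro i j
    by_cases hA : G.Adj i j
    · rw [if_pos hA, one_mul]
      apply mul_nonpos_of_nonneg_of_nonpos
      · linarith [htler i j]
      · linarith [htler i j, hrp2]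
    · rw [if_neg hA, zero_mul]
  -- hence every adjacency term vanishes
  have hsum0 : ∑ i, ∑ j, (if G.Adj i j then (1:ℝ) else 0)
      * (((r : ℝ) - t i j) * (t i j - (p : ℝ) + 2)) = 0 := by
    refine le_antisymm (Finset.sum_nonpos fun i _ => Finset.sum_nonpos fun j _ => hterm_le i j) ?_
    rw [← hadjform]
    exact hmaster
  have hterm0 : ∀ i j, (if G.Adj i j then (1:ℝ) else 0)
      * (((r : ℝ) - t i j) * (t i j - (p : ℝ) + 2)) = 0 := by
    intro i j
    have houter := (Finset.sum_eq_zero_iff_of_nonpos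
      (fun i _ => Finset.sum_nonpos fun j _ => hterm_le i j)).mp hsum0 i (Finset.mem_univ i)
    exact (Finset.sum_eq_zero_iff_of_nonpos
      (fun j _ => hterm_le i j)).mp houter j (Finset.mem_univ j)
  -- on edges the alignment is perfect
  have hedge : ∀ i j, G.Adj i j → X i = X j := by
    intro i j hA
    have h := hterm0 i j
    rw [if_pos hA, one_mul] at h
    rcases mul_eq_zero.mp h with h1 | h2
    · exact hXeq_of_t i j (by linarith)
    · have : t i j = (p : ℝ) - 2 := by linarith
      have : t i j = (r : ℝ) := le_antisymm (htler i j) (by rw [this]; exact hrp2)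
      exact hXeq_of_t i j this
  -- connectivity propagates the equality
  have hwalk : ∀ i j, (w : G.Walk i j) → X i = X j := by
    intro i j w
    induction w with
    | nil => rfl
    | cons h _ ih => exact (hedge _ _ h).trans ih
  have hall : ∀ i j, X i = X j := by
    intro i j
    obtain ⟨w⟩ := hG.preconnected i j
    exact hwalk i j w
  -- conclusion
  have hblockeq : ∀ i j, blk Y i * (blk Y j)ᵀ = Zb i * (Zb j)ᵀ := by
    intro i j
    rw [hYZ i, hYZ j, hall i j]
    calc Zb i * X j * (Zb j * X j)ᵀ
        = Zb i * ((X j * (X j)ᵀ) * (Zb j)ᵀ) := by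
          rw [Matrix.transpose_mul]
          simp only [Matrix.mul_assoc]
      _ = Zb i * (Zb j)ᵀ := by rw [hXX j, Matrix.one_mul]
  ext q q'
  obtain ⟨i, a⟩ := q
  obtain ⟨j, b⟩ := q'
  have hl : (Y * Yᵀ) (i, a) (j, b) = (blk Y i * (blk Y j)ᵀ) a b := by
    simp [Matrix.mul_apply, blk]
  have hrr : (Zstack Zb * (Zstack Zb)ᵀ) (i, a) (j, b) = (Zb i * (Zb j)ᵀ) a b := by
    simp [Matrix.mul_apply, Zstack]
  rw [hl, hrr, hblockeq i j]

end SyncPaper
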